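/- Let F : ℂ → ℂ → ℂ be such that (z,w) ↦ F z w is analytic (jointly, as a function on ℂ × ℂ) on 𝔻 × 𝔻, F is Hermitian-symmetric on 𝔻 × 𝔻 (i.e. F z w = conj (F (conj w) (conj z)) for all z, w ∈ 𝔻), and F satisfies the PDE deriv (fun ζ => F ζ w) z = w² · deriv (fun ξ => F z ξ) w + w · F z w for all z, w ∈ 𝔻. Then F 0 0 is real and F z w = F 0 0 · (1 - z·w)⁻¹ for all z, w ∈ 𝔻. -/

import Mathlib

open ComplexConjugate Complex Asymptotics Filter

private lemma conj_comp_hasDerivAt {f : ℂ → ℂ} {d z : ℂ}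
    (h : HasDerivAt f d (conj z)) :
    HasDerivAt (fun ξ : ℂ => conj (f (conj ξ))) (conj d) z := by
  rw [hasDerivAt_iff_isLittleO] at h ⊢
  have hc : Tendsto (fun x : ℂ => conj x) (nhds z) (nhds (conj z)) :=
    Complex.continuous_conj.tendsto z
  have h2 := h.comp_tendsto hc
  rw [← isLittleO_norm_norm] at h2 ⊢
  have e1 : ∀ x : ℂ, conj (f (conj x)) - conj (f (conj z)) - (x - z) • conj d
      = conj (f (conj x) - f (conj z) - (conj x - conj z) • d) := by
    intro x; simp [smul_eq_mul, map_sub, map_mul]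
  have e2 : (fun x : ℂ => ‖conj (f (conj x)) - conj (f (conj z)) - (x - z) • conj d‖)
      = fun x : ℂ => ‖f (conj x) - f (conj z) - (conj x - conj z) • d‖ := by
    funext x; rw [e1]; exact norm_star _
  have e3 : (fun x : ℂ => ‖x - z‖) = fun x : ℂ => ‖conj x - conj z‖ := by
    funext x; rw [← map_sub]; exact (norm_star _).symm
  rw [e2, e3]
  exact h2

theorem hardy_kernel_unique (F : ℂ → ℂ → ℂ)
    (hA : AnalyticOn ℂ (fun p : ℂ × ℂ => F p.1 p.2)
      (Metric.ball (0 : ℂ) 1 ×ˢ Metric.ball (0 : ℂ) 1))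
    (hSym : ∀ z w : ℂ, ‖z‖ < 1 → ‖w‖ < 1 →
      F z w = conj (F (conj w) (conj z)))
    (hPDE : ∀ z w : ℂ, ‖z‖ < 1 → ‖w‖ < 1 →
      deriv (fun ζ : ℂ => F ζ w) z
        = w ^ 2 * deriv (fun ξ : ℂ => F z ξ) w + w * F z w) :
    (F 0 0).im = 0 ∧
      ∀ z w : ℂ, ‖z‖ < 1 → ‖w‖ < 1 →
        F z w = F 0 0 * (1 - z * w)⁻¹ := by
  have mem : ∀ {z : ℂ}, ‖z‖ < 1 → z ∈ Metric.ball (0 : ℂ) 1 := by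
    intro z hz; simpa [Metric.mem_ball, Complex.dist_eq] using hz
  have mem' : ∀ {z : ℂ}, z ∈ Metric.ball (0 : ℂ) 1 → ‖z‖ < 1 := by
    intro z hz; simpa [Metric.mem_ball, Complex.dist_eq] using hz
  have hopen : IsOpen ((Metric.ball (0 : ℂ) 1) ×ˢ (Metric.ball (0 : ℂ) 1)) :=
    Metric.isOpen_ball.prod Metric.isOpen_ball
  have hDiff : ∀ z w : ℂ, ‖z‖ < 1 → ‖w‖ < 1 →
      DifferentiableAt ℂ (fun p : ℂ × ℂ => F p.1 p.2) (z, w) := by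
    intro z w hz hw
    exact hA.differentiableOn.differentiableAt (hopen.mem_nhds ⟨mem hz, mem hw⟩)
  have hd1 : ∀ z w : ℂ, ‖z‖ < 1 → ‖w‖ < 1 →
      DifferentiableAt ℂ (fun ζ : ℂ => F ζ w) z := by
    intro z w hz hw
    exact (hDiff z w hz hw).comp (f := fun ζ : ℂ => (ζ, w)) z (differentiableAt_fun_id.prodMk (differentiableAt_const w))
  have hd2 : ∀ z w : ℂ, ‖z‖ < 1 → ‖w‖ < 1 →
      DifferentiableAt ℂ (fun ξ : ℂ => F z ξ) w := by
    intro z w hz hw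
    exact (hDiff z w hz hw).comp w ((differentiableAt_const z).prodMk differentiableAt_id)
  have hne : ∀ z w : ℂ, ‖z‖ < 1 → ‖w‖ < 1 → (1 : ℂ) - z * w ≠ 0 := by
    intro z w hz hw h
    have h1 : z * w = 1 := by linear_combination -h
    have : ‖z * w‖ < 1 := by
      rw [norm_mul]
      nlinarith [norm_nonneg z, norm_nonneg w]
    rw [h1] at this; simp at this
  have hne' : ∀ z w : ℂ, ‖z‖ < 1 → ‖w‖ < 1 → (1 : ℂ) + z * w ≠ 0 := by
    intro z w hz hw h
    have h1 : z * w = -1 := by linear_combination h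
    have : ‖z * w‖ < 1 := by
      rw [norm_mul]
      nlinarith [norm_nonneg z, norm_nonneg w]
    rw [h1] at this; simp at this
  -- symmetry of derivatives
  have hsymQ : ∀ z w : ℂ, ‖z‖ < 1 → ‖w‖ < 1 →
      deriv (fun ξ : ℂ => F z ξ) w = conj (deriv (fun ζ : ℂ => F ζ (conj z)) (conj w)) := by
    intro z w hz hw
    have habsz : ‖conj z‖ < 1 := by simpa using hz
    have habsw : ‖conj w‖ < 1 := by simpa using hw
    have hev : (fun ξ : ℂ => F z ξ) =ᶠ[nhds w] (fun ξ : ℂ => conj (F (conj ξ) (conj z))) := by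
      filter_upwards [Metric.isOpen_ball.mem_nhds (mem hw)] with ξ hξ
      exact hSym z ξ hz (mem' hξ)
    rw [hev.deriv_eq]
    have hf : HasDerivAt (fun y : ℂ => F y (conj z))
        (deriv (fun y : ℂ => F y (conj z)) (conj w)) (conj w) :=
      (hd1 (conj w) (conj z) habsw habsz).hasDerivAt
    exact (conj_comp_hasDerivAt hf).deriv
  have hsymP : ∀ z w : ℂ, ‖z‖ < 1 → ‖w‖ < 1 →
      deriv (fun ζ : ℂ => F ζ w) z = conj (deriv (fun ξ : ℂ => F (conj w) ξ) (conj z)) := by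
    intro z w hz hw
    have habsz : ‖conj z‖ < 1 := by simpa using hz
    have habsw : ‖conj w‖ < 1 := by simpa using hw
    have hev : (fun ζ : ℂ => F ζ w) =ᶠ[nhds z] (fun ζ : ℂ => conj (F (conj w) (conj ζ))) := by
      filter_upwards [Metric.isOpen_ball.mem_nhds (mem hz)] with ζ hζ
      exact hSym ζ w (mem' hζ) hw
    rw [hev.deriv_eq]
    have hf : HasDerivAt (fun y : ℂ => F (conj w) y)
        (deriv (fun y : ℂ => F (conj w) y) (conj z)) (conj z) :=
      (hd2 (conj w) (conj z) habsw habsz).hasDerivAt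
    exact (conj_comp_hasDerivAt hf).deriv
  -- key identities
  have key : ∀ z w : ℂ, ‖z‖ < 1 → ‖w‖ < 1 →
      (1 - z * w) * deriv (fun ζ : ℂ => F ζ w) z = w * F z w ∧
      (1 - z * w) * deriv (fun ξ : ℂ => F z ξ) w = z * F z w := by
    intro z w hz hw
    have habsz : ‖conj z‖ < 1 := by simpa using hz
    have habsw : ‖conj w‖ < 1 := by simpa using hw
    have e1 := hPDE z w hz hw
    have e2' := hPDE (conj w) (conj z) habsw habsz
    have eQ := hsymQ z w hz hw
    have eP := hsymP z w hz hw
    have eF : conj (F (conj w) (conj z)) = F z w := (hSym z w hz hw).symm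
    have e2 : deriv (fun ξ : ℂ => F z ξ) w
        = z ^ 2 * deriv (fun ζ : ℂ => F ζ w) z + z * F z w := by
      rw [eQ, e2']
      simp only [map_add, map_mul, map_pow, Complex.conj_conj]
      rw [← eP, eF]
    have hq : (1 - z * w) * deriv (fun ξ : ℂ => F z ξ) w = z * F z w := by
      have expand : (1 + z * w) * ((1 - z * w) * deriv (fun ξ : ℂ => F z ξ) w)
          = (1 + z * w) * (z * F z w) := by
        linear_combination e2 + z ^ 2 * e1
      exact mul_left_cancel₀ (hne' z w hz hw) expand
    refine ⟨?_, hq⟩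
    linear_combination (1 - z * w) * e1 + w ^ 2 * hq
  -- constancy in the first variable
  have h0lt : ‖(0 : ℂ)‖ < 1 := by simp
  have step1 : ∀ z w : ℂ, ‖z‖ < 1 → ‖w‖ < 1 →
      (1 - z * w) * F z w = F 0 w := by
    intro z w hz hw
    have hder : ∀ ζ : ℂ, ‖ζ‖ < 1 →
        HasDerivAt (fun ζ : ℂ => (1 - ζ * w) * F ζ w) 0 ζ := by
      intro ζ hζ
      have hF := (hd1 ζ w hζ hw).hasDerivAt
      have hlin : HasDerivAt (fun ζ : ℂ => 1 - ζ * w) (-w) ζ := by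
        simpa using ((hasDerivAt_id ζ).mul_const w).const_sub 1
      have hmul := hlin.mul hF
      refine hmul.congr_deriv ?_
      linear_combination (key ζ w hζ hw).1
    have hconst := (convex_ball (0 : ℂ) 1).is_const_of_fderivWithin_eq_zero
      (f := fun ζ : ℂ => (1 - ζ * w) * F ζ w)
      (fun ζ hζ => ((hder ζ (mem' hζ)).differentiableAt).differentiableWithinAt)
      (fun ζ hζ => by
        rw [fderivWithin_of_isOpen Metric.isOpen_ball hζ,
          (hder ζ (mem' hζ)).hasFDerivAt.fderiv]
        ext; simp)
      (mem hz) (mem h0lt)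
    simpa using hconst
  have step2 : ∀ w : ℂ, ‖w‖ < 1 → F 0 w = F 0 0 := by
    intro w hw
    have hder : ∀ ξ : ℂ, ‖ξ‖ < 1 → HasDerivAt (fun ξ : ℂ => F 0 ξ) 0 ξ := by
      intro ξ hξ
      have hF := (hd2 0 ξ h0lt hξ).hasDerivAt
      have hq := (key 0 ξ h0lt hξ).2
      simp only [zero_mul, sub_zero, one_mul] at hq
      rwa [hq] at hF
    exact (convex_ball (0 : ℂ) 1).is_const_of_fderivWithin_eq_zero
      (f := fun ξ : ℂ => F 0 ξ)
      (fun ξ hξ => ((hder ξ (mem' hξ)).differentiableAt).differentiableWithinAt)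
      (fun ξ hξ => by
        rw [fderivWithin_of_isOpen Metric.isOpen_ball hξ,
          (hder ξ (mem' hξ)).hasFDerivAt.fderiv]
        ext; simp)
      (mem hw) (mem h0lt)
  constructor
  · have h := hSym 0 0 h0lt h0lt
    rw [map_zero] at h
    have h2 := congrArg Complex.im h
    simp only [Complex.conj_im] at h2
    linarith
  · intro z w hz hw
    have h1 := step1 z w hz hw
    rw [step2 w hw] at h1
    have h0 := hne z w hz hw
    rw [← h1, mul_comm (1 - z * w) (F z w), mul_assoc, mul_inv_cancel₀ h0, mul_one]
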